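/- For u, w ∈ S∞ and k ≥ 1, one has u ≤_k w in the k-Bruhat order if and only if: (1) u(i) ≤ w(i) for every i ≤ k; (2) u(i) ≥ w(i) for every i > k; and (3) for all i < j with either j ≤ k or k < i, if u(i) < u(j) then w(i) < w(j). -/

import Mathlib

/-
Common definitions for "A Monoid for the universal k-Bruhat order"
(Bergeron–Sottile).

`S∞` is modeled as `Equiv.Perm ℕ+`; membership in `S∞` (finite support)
is the predicate `FinSupp`.
-/

noncomputable section

open scoped Classical

/-- `S∞`: permutations of the positive integers `{1,2,3,...}`. -/
abbrev Sinf : Type := Equiv.Perm ℕ+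

/-- A permutation belongs to `S∞` iff it moves only finitely many points. -/
def FinSupp (w : Sinf) : Prop := {i : ℕ+ | w i ≠ i}.Finite

/-- `ℓ(w)`: the number of inversions, i.e. pairs `i < j` with `w i > w j`. -/
def len (w : Sinf) : ℕ := {p : ℕ+ × ℕ+ | p.1 < p.2 ∧ w p.2 < w p.1}.ncard

/-- The cover relation of the `k`-Bruhat order: `w` covers `u` iff
`ℓ(w) = ℓ(u) + 1` and `w = u·(a b)` for some `a ≤ k < b`. -/
def kCover (k : ℕ+) (u w : Sinf) : Prop :=
  len w = len u + 1 ∧ ∃ a b : ℕ+, a ≤ k ∧ k < b ∧ w = u * Equiv.swap a b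

/-- The `k`-Bruhat order `≤ₖ`: the partial order generated by `kCover`. -/
def kBruhat (k : ℕ+) : Sinf → Sinf → Prop := Relation.ReflTransGen (kCover k)

/-- `ℓᵤ(ζ) = ℓ(ζu) − ℓ(u)` for any (some chosen) `u ∈ S∞`, `k` with `u ≤ₖ ζu`. -/
def ellU (ζ : Sinf) : ℕ :=
  if h : ∃ p : Sinf × ℕ+, FinSupp p.1 ∧ kBruhat p.2 p.1 (ζ * p.1) then
    len (ζ * h.choose.1) - len h.choose.1
  else 0

/-- `ℚ[S∞]` as a `ℚ`-vector space with basis the permutations. -/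
abbrev QS : Type := Sinf →₀ ℚ

/-- The operator `û_{αβ}` on `ℚ[S∞]`: on a basis permutation `ζ` it gives
`(α β)·ζ` if `ℓᵤ((α β)ζ) = ℓᵤ(ζ) + 1`, and `0` otherwise. -/
def uhat (α β : ℕ+) : QS →ₗ[ℚ] QS :=
  Finsupp.lsum ℚ (fun ζ : Sinf =>
    LinearMap.toSpanSingleton ℚ QS
      (if ellU (Equiv.swap α β * ζ) = ellU ζ + 1 then
        Finsupp.single (Equiv.swap α β * ζ) (1 : ℚ)
      else 0))

/-- Index type for the generators `u_{αβ}`, `0 < α < β`. -/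
abbrev Gen : Type := {p : ℕ+ × ℕ+ // p.1 < p.2}

/-- For `L = [(α₁,β₁),…,(αₙ,βₙ)]`, the composition `û_{αₙβₙ}∘⋯∘û_{α₁β₁}`
(the operator `û_{α₁β₁}` acts first). -/
def wordOp (L : List Gen) : QS →ₗ[ℚ] QS :=
  L.foldl (fun f p => (uhat p.val.1 p.val.2).comp f) LinearMap.id

/-- The universal `k`-Bruhat order `≼`. -/
def uBruhat (η ζ : Sinf) : Prop :=
  ∃ u : Sinf, FinSupp u ∧ ∃ k : ℕ+, kBruhat k u (η * u) ∧ kBruhat k (η * u) (ζ * u)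

/-- `ζ` covers `η` in `≼`. -/
def uCover (η ζ : Sinf) : Prop :=
  uBruhat η ζ ∧ η ≠ ζ ∧ ∀ ξ : Sinf, uBruhat η ξ → uBruhat ξ ζ → ξ = η ∨ ξ = ζ

/-- `up(ζ) = {j : ζ⁻¹(j) < j}`. -/
def upS (ζ : Sinf) : Set ℕ+ := {j | ζ⁻¹ j < j}

/-- `dw(ζ) = {j : ζ⁻¹(j) > j}`. -/
def dwS (ζ : Sinf) : Set ℕ+ := {j | j < ζ⁻¹ j}

/-- `R_u(ζ)`: the `u`-reduced sequences for `ζ`, i.e. sequences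
`((α₁,β₁),…,(αₙ,βₙ))` with `û_{αₙβₙ}∘⋯∘û_{α₁β₁}(1) = ζ`. -/
def Rset (ζ : Sinf) : Set (List Gen) :=
  {L | wordOp L (Finsupp.single 1 1) = Finsupp.single ζ 1}

/-- `H_p(ζ)`: empty if some `pᵢ < 0`; otherwise those `u`-reduced sequences for `ζ`
whose `α`'s strictly increase within each consecutive block of sizes `p₁,…,p_r`
(indices `i, i+1` lie in the same block iff `i+1` is not a partial sum of `p`). -/
def Hset (p : List ℤ) (ζ : Sinf) : Set (List Gen) :=
  {L | L ∈ Rset ζ ∧ (∀ x ∈ p, 0 ≤ x) ∧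
    ∀ (i : ℕ) (q r : Gen), L[i]? = some q → L[i + 1]? = some r →
      (∀ t : ℕ, (p.take t).sum ≠ (i : ℤ) + 1) → q.val.1 < r.val.1}

/-- `E_p(ζ)`: as `H_p(ζ)` but with the `α`'s strictly decreasing in each block. -/
def Eset (p : List ℤ) (ζ : Sinf) : Set (List Gen) :=
  {L | L ∈ Rset ζ ∧ (∀ x ∈ p, 0 ≤ x) ∧
    ∀ (i : ℕ) (q r : Gen), L[i]? = some q → L[i + 1]? = some r →
      (∀ t : ℕ, (p.take t).sum ≠ (i : ℤ) + 1) → r.val.1 < q.val.1}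

/-- `E'_p(ζ)`: as `H_p(ζ)` but with the `β`'s strictly decreasing in each block. -/
def E'set (p : List ℤ) (ζ : Sinf) : Set (List Gen) :=
  {L | L ∈ Rset ζ ∧ (∀ x ∈ p, 0 ≤ x) ∧
    ∀ (i : ℕ) (q r : Gen), L[i]? = some q → L[i + 1]? = some r →
      (∀ t : ℕ, (p.take t).sum ≠ (i : ℤ) + 1) → r.val.2 < q.val.2}

/-- The integer sequence `λ_σ = (λ_{σ(i)} + i − σ(i))ᵢ` (here `0`-indexed). -/
def lamSeq (r : ℕ) (lam : Fin r → ℕ) (σ : Equiv.Perm (Fin r)) : List ℤ :=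
  (List.finRange r).map (fun i => (lam (σ i) : ℤ) + (i : ℤ) - ((σ i : ℕ) : ℤ))

/-- `c_λ^ζ := Σ_{σ ∈ S_r} ε(σ)·|H_{λ_σ}(ζ)|`. -/
def cCoef (r : ℕ) (lam : Fin r → ℕ) (ζ : Sinf) : ℤ :=
  ∑ σ : Equiv.Perm (Fin r),
    ((Equiv.Perm.sign σ : ℤˣ) : ℤ) * ((Hset (lamSeq r lam σ) ζ).ncard : ℤ)

/-- The free monoid-with-zero on the generators `u_{αβ}`. -/
abbrev FM : Type := WithZero (FreeMonoid Gen)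

/-- The generator `u_{αβ}` as an element of `FM`. -/
def g (α β : ℕ+) (h : α < β) : FM :=
  ((FreeMonoid.of (⟨(α, β), h⟩ : Gen) : FreeMonoid Gen) : FM)

/-- The defining relations (1)–(5) of the monoid `M`. -/
inductive MRel : FM → FM → Prop
  | r1 (α β γ δ : ℕ+) (h1 : α < β) (h2 : β < γ) (h3 : γ < δ) :
      MRel (g β γ h2 * g γ δ h3 * g α γ (h1.trans h2))
           (g β δ (h2.trans h3) * g α β h1 * g β γ h2)
  | r2 (α β γ δ : ℕ+) (h1 : α < β) (h2 : β < γ) (h3 : γ < δ) :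
      MRel (g α γ (h1.trans h2) * g γ δ h3 * g β γ h2)
           (g β γ h2 * g α β h1 * g β δ (h2.trans h3))
  | r3a (α β γ δ : ℕ+) (h1 : α < β) (h2 : γ < δ) (h : β < γ) :
      MRel (g α β h1 * g γ δ h2) (g γ δ h2 * g α β h1)
  | r3b (α β γ δ : ℕ+) (h1 : α < β) (h2 : γ < δ) (h3 : α < γ) (h4 : δ < β) :
      MRel (g α β h1 * g γ δ h2) (g γ δ h2 * g α β h1)
  | r4a (α β γ δ : ℕ+) (h1 : α ≤ β) (h2 : β < γ) (h3 : γ ≤ δ) :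
      MRel (g α γ (h1.trans_lt h2) * g β δ (h2.trans_le h3)) 0
  | r4b (α β γ δ : ℕ+) (h1 : α ≤ β) (h2 : β < γ) (h3 : γ ≤ δ) :
      MRel (g β δ (h2.trans_le h3) * g α γ (h1.trans_lt h2)) 0
  | r5a (α β γ : ℕ+) (h1 : α < β) (h2 : β < γ) :
      MRel (g β γ h2 * g α β h1 * g β γ h2) 0
  | r5b (α β γ : ℕ+) (h1 : α < β) (h2 : β < γ) :
      MRel (g α β h1 * g β γ h2 * g α β h1) 0

/-- The congruence generated by the relations (1)–(5); the monoid `M` is its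
quotient `MCon.Quotient`. -/
def MCon : Con FM := conGen MRel

/-- The word `u_{αₙβₙ}⋯u_{α₁β₁} ∈ FM` for `L = [(α₁,β₁),…,(αₙ,βₙ)]`. -/
def wordFM (L : List Gen) : FM :=
  ((FreeMonoid.ofList L.reverse : FreeMonoid Gen) : FM)

/-- The generator `u_{αβ}` in the free monoid (no zero). -/
def g3 (α β : ℕ+) (h : α < β) : FreeMonoid Gen := FreeMonoid.of ⟨(α, β), h⟩

/-- The relations (1)–(3) only, on the free monoid (no zero). -/
inductive MRel3 : FreeMonoid Gen → FreeMonoid Gen → Prop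
  | r1 (α β γ δ : ℕ+) (h1 : α < β) (h2 : β < γ) (h3 : γ < δ) :
      MRel3 (g3 β γ h2 * g3 γ δ h3 * g3 α γ (h1.trans h2))
            (g3 β δ (h2.trans h3) * g3 α β h1 * g3 β γ h2)
  | r2 (α β γ δ : ℕ+) (h1 : α < β) (h2 : β < γ) (h3 : γ < δ) :
      MRel3 (g3 α γ (h1.trans h2) * g3 γ δ h3 * g3 β γ h2)
            (g3 β γ h2 * g3 α β h1 * g3 β δ (h2.trans h3))
  | r3a (α β γ δ : ℕ+) (h1 : α < β) (h2 : γ < δ) (h : β < γ) :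
      MRel3 (g3 α β h1 * g3 γ δ h2) (g3 γ δ h2 * g3 α β h1)
  | r3b (α β γ δ : ℕ+) (h1 : α < β) (h2 : γ < δ) (h3 : α < γ) (h4 : δ < β) :
      MRel3 (g3 α β h1 * g3 γ δ h2) (g3 γ δ h2 * g3 α β h1)

/-- The word (with letters `(αᵢ,βᵢ)`) encoding a maximal chain of `[u,w]ₖ`:
there are permutations `u = u₀ <ₖ u₁ <ₖ ⋯ <ₖ uₙ = w` (each step a `k`-Bruhat
cover) with `uᵢ₊₁ = (αᵢ₊₁ βᵢ₊₁)·uᵢ`. -/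
def IsChainWord (k : ℕ+) (u w : Sinf) (L : List Gen) : Prop :=
  ∃ c : ℕ → Sinf, c 0 = u ∧ c L.length = w ∧
    ∀ (i : ℕ) (q : Gen), L[i]? = some q →
      kCover k (c i) (c (i + 1)) ∧ c (i + 1) = Equiv.swap q.val.1 q.val.2 * c i

/-- For an order-preserving `f`, the induced map on generators
`(α,β) ↦ (f α, f β)`. -/
def genMap (f : ℕ+ → ℕ+) (p : Gen) : Gen :=
  if h : f p.val.1 < f p.val.2 then ⟨(f p.val.1, f p.val.2), h⟩ else p

/-- For an order-reversing `f`, the induced map on generators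
`(α,β) ↦ (f β, f α)`. -/
def vmapGen (f : ℕ+ → ℕ+) (p : Gen) : Gen :=
  if h : f p.val.2 < f p.val.1 then ⟨(f p.val.2, f p.val.1), h⟩ else p

/-- The map `φ_a : {1,2,…} → {1,2,…}`, `i ↦ i` for `i < a` and `i ↦ i+1` for `i ≥ a`. -/
def phiF (a : ℕ+) (i : ℕ+) : ℕ+ := if i < a then i else i + 1

end

noncomputable section KBAuxSec
open scoped Classical
open Equiv Finset

private lemma kb_pnle {a b : ℕ+} : a ≤ b ↔ (a:ℕ) ≤ (b:ℕ) := by simp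
private lemma kb_pnlt {a b : ℕ+} : a < b ↔ (a:ℕ) < (b:ℕ) := by simp
private lemma kb_pnne {a b : ℕ+} (h : a ≠ b) : (a:ℕ) ≠ (b:ℕ) := by
  simpa using h

private lemma kb_exists_bound (v : Sinf) (hv : FinSupp v) (b : ℕ+) :
    ∃ N : ℕ+, b < N ∧ ∀ x, N ≤ x → v x = x := by
  set M : ℕ+ := (hv.toFinset ∪ {b}).sup (fun x => x) with hM
  refine ⟨M + 1, ?_, ?_⟩
  · have h1 : b ≤ M := Finset.le_sup (f := fun x => x) (by simp)
    have h2 : (M:ℕ) < (M+1 : ℕ+) := by simp [← PNat.coe_lt_coe]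
    exact lt_of_le_of_lt h1 (kb_pnlt.mpr h2)
  · intro x hx
    by_contra hne
    have hmem' : x ∈ hv.toFinset := by
      exact (Set.Finite.mem_toFinset (hs := hv)).mpr hne
    have hmem : x ∈ hv.toFinset ∪ {b} := Finset.mem_union_left _ hmem'
    have h2 : x ≤ M := Finset.le_sup (f := fun x => x) hmem
    have h3 := kb_pnle.mp hx
    have h4 := kb_pnle.mp h2
    simp only [PNat.add_coe, PNat.one_coe] at h3
    omega

private lemma kb_maps_lt {v : Sinf} {N : ℕ+} (hN : ∀ x, N ≤ x → v x = x) :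
    ∀ x, x < N → v x < N := by
  intro x hx
  by_contra h
  push_neg at h
  have := hN _ h
  have : x = v x := v.injective (by rw [this])
  exact absurd hx (by rw [this]; exact not_lt.mpr h)

/-- `len` as a finset card, for any bound `N` beyond the support. -/
private lemma kb_len_eq_card {v : Sinf} {N : ℕ+} (hN : ∀ x, N ≤ x → v x = x) :
    len v = (((Finset.Iio N) ×ˢ (Finset.Iio N)).filter
      (fun p : ℕ+ × ℕ+ => p.1 < p.2 ∧ v p.2 < v p.1)).card := by
  rw [len, ← Set.ncard_coe_finset]
  congr 1
  ext ⟨i, j⟩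
  simp only [Set.mem_setOf_eq, Finset.coe_filter, Finset.mem_product, Finset.mem_Iio]
  constructor
  · rintro ⟨hij, hvij⟩
    refine ⟨⟨?_, ?_⟩, hij, hvij⟩
    · by_contra h
      push_neg at h
      have hj : N ≤ j := le_of_lt (lt_of_le_of_lt h hij)
      rw [hN i h, hN j hj] at hvij
      exact absurd hij (not_lt.mpr (le_of_lt hvij))
    · by_contra h
      push_neg at h
      rw [hN j h] at hvij
      rcases lt_or_ge i N with hi | hi
      · exact absurd (lt_trans hvij (kb_maps_lt hN i hi)) (not_lt.mpr h)
      · rw [hN i hi] at hvij; exact absurd hij (not_lt.mpr (le_of_lt hvij))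
  · rintro ⟨_, hij, hvij⟩; exact ⟨hij, hvij⟩


set_option maxHeartbeats 2000000 in
private lemma kb_tsum (ai bi ii va vb vi : ℕ) (hab : ai < bi) (hia : ii ≠ ai) (hib : ii ≠ bi)
    (hva : vi ≠ va) (hvb : vi ≠ vb) :
  ((if bi < ii ∧ vi < va then (1:ℤ) else 0) - (if ai < ii ∧ vi < va then 1 else 0))
  + (((if ai < ii ∧ vi < vb then 1 else 0) - (if bi < ii ∧ vi < vb then 1 else 0))
  + (((if ii < bi ∧ va < vi then 1 else 0) - (if ii < ai ∧ va < vi then 1 else 0))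
  + ((if ii < ai ∧ vb < vi then 1 else 0) - (if ii < bi ∧ vb < vi then 1 else 0))))
  = (if ai < ii ∧ ii < bi ∧ va < vi ∧ vi < vb then 2 else 0)
    - (if ai < ii ∧ ii < bi ∧ vb < vi ∧ vi < va then 2 else 0) := by
  rcases lt_trichotomy ai ii with h1 | h1 | h1 <;>
  rcases lt_trichotomy ii bi with h2 | h2 | h2 <;>
  rcases lt_trichotomy va vi with h3 | h3 | h3 <;>
  rcases lt_trichotomy vb vi with h4 | h4 | h4 <;>
    simp_all [Nat.lt_asymm, Nat.le_of_lt, not_lt_of_gt] <;> omega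

/-- The fundamental length-change identity for multiplying by a transposition. -/
private lemma kb_len_diff (v : Sinf) (hv : FinSupp v) (a b : ℕ+) (hab : a < b) :
    (len (v * Equiv.swap a b) : ℤ) =
      (len v : ℤ) + (((if v a < v b then (1:ℤ) else 0) - (if v b < v a then 1 else 0))
      + ∑ j ∈ Finset.Ioo a b,
         ((if v a < v j ∧ v j < v b then (2:ℤ) else 0)
           - (if v b < v j ∧ v j < v a then 2 else 0))) := by
  obtain ⟨N, hbN, hN⟩ := kb_exists_bound v hv b
  have haN : a < N := hab.trans hbN
  set s : Equiv.Perm ℕ+ := Equiv.swap a b with hs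
  have hsfix : ∀ x, N ≤ x → s x = x := by
    intro x hx
    exact Equiv.swap_apply_of_ne_of_ne (by rintro rfl; exact absurd hx (not_le.mpr haN))
      (by rintro rfl; exact absurd hx (not_le.mpr hbN))
  have hN' : ∀ x, N ≤ x → (v * s) x = x := by
    intro x hx
    rw [Equiv.Perm.mul_apply, hsfix x hx]
    exact hN x hx
  set R : Finset ℕ+ := Finset.Iio N with hR
  set Q : Finset (ℕ+ × ℕ+) := R ×ˢ R with hQ
  -- len as integer sums over Q
  have hlv : (len v : ℤ) = ∑ p ∈ Q, (if p.1 < p.2 ∧ v p.2 < v p.1 then (1:ℤ) else 0) := by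
    rw [kb_len_eq_card hN, Finset.card_filter]
    push_cast
    rfl
  have hlv' : (len (v * s) : ℤ)
      = ∑ p ∈ Q, (if s p.1 < s p.2 ∧ v p.2 < v p.1 then (1:ℤ) else 0) := by
    rw [kb_len_eq_card hN', Finset.card_filter]
    push_cast
    have hsR : ∀ x ∈ R, s x ∈ R := by
      intro x hx
      rw [hR, Finset.mem_Iio] at *
      rcases eq_or_ne x a with rfl | hxa
      · rw [hs, Equiv.swap_apply_left]; exact hbN
      · rcases eq_or_ne x b with rfl | hxb
        · rw [hs, Equiv.swap_apply_right]; exact haN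
        · rw [hs, Equiv.swap_apply_of_ne_of_ne hxa hxb]; exact hx
    refine Finset.sum_nbij' (fun p => (s p.1, s p.2)) (fun p => (s p.1, s p.2)) ?_ ?_ ?_ ?_ ?_
    · rintro ⟨i, j⟩ hp
      rw [hQ, Finset.mem_product] at *
      exact ⟨hsR _ hp.1, hsR _ hp.2⟩
    · rintro ⟨i, j⟩ hp
      rw [hQ, Finset.mem_product] at *
      exact ⟨hsR _ hp.1, hsR _ hp.2⟩
    · rintro ⟨i, j⟩ _
      simp [hs]
    · rintro ⟨i, j⟩ _
      simp [hs]
    · rintro ⟨i, j⟩ _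
      have h1 : (v * s) (s i) = v i := by
        rw [Equiv.Perm.mul_apply, hs, Equiv.swap_apply_self]
      have h2 : (v * s) (s j) = v j := by
        rw [Equiv.Perm.mul_apply, hs, Equiv.swap_apply_self]
      simp only [Equiv.Perm.coe_mul, Function.comp_apply, hs, Equiv.swap_apply_self]
      split_ifs <;> simp
  -- the difference as a sum over Q
  set d : ℕ+ × ℕ+ → ℤ := fun p =>
    (if s p.1 < s p.2 ∧ v p.2 < v p.1 then (1:ℤ) else 0)
      - (if p.1 < p.2 ∧ v p.2 < v p.1 then (1:ℤ) else 0) with hd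
  have hdiff : (len (v * s) : ℤ) - (len v : ℤ) = ∑ p ∈ Q, d p := by
    rw [hlv, hlv', hd, Finset.sum_sub_distrib]
  -- d vanishes off rows/columns a, b
  have hd0 : ∀ i j : ℕ+, i ≠ a → i ≠ b → j ≠ a → j ≠ b → d (i, j) = 0 := by
    intro i j hia hib hja hjb
    rw [hd]
    simp [Equiv.swap_apply_of_ne_of_ne hia hib, Equiv.swap_apply_of_ne_of_ne hja hjb, hs]
  have habne : a ≠ b := ne_of_lt hab
  have hsub : ({a, b} : Finset ℕ+) ⊆ R := by
    intro x hx
    rcases Finset.mem_insert.mp hx with rfl | hx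
    · rw [hR, Finset.mem_Iio]; exact haN
    · rw [Finset.mem_singleton] at hx; subst hx; rw [hR, Finset.mem_Iio]; exact hbN
  -- split the double sum
  have hsum1 : ∑ p ∈ Q, d p
      = ∑ i ∈ R \ {a, b}, (∑ j ∈ R, d (i, j)) + (∑ j ∈ R, d (a, j) + ∑ j ∈ R, d (b, j)) := by
    rw [hQ, Finset.sum_product, ← Finset.sum_sdiff hsub]
    rw [Finset.sum_pair habne]
  have hrow : ∀ i : ℕ+, i ≠ a → i ≠ b → ∑ j ∈ R, d (i, j) = d (i, a) + d (i, b) := by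
    intro i hia hib
    rw [← Finset.sum_pair (f := fun j => d (i, j)) habne]
    refine (Finset.sum_subset hsub ?_).symm
    intro j _ hj
    have hja : j ≠ a := fun h => hj (by rw [h]; exact Finset.mem_insert_self a {b})
    have hjb : j ≠ b := fun h => hj (by rw [h]; exact Finset.mem_insert_of_mem (Finset.mem_singleton_self b))
    exact hd0 i j hia hib hja hjb
  have hcola : ∑ j ∈ R, d (a, j)
      = ∑ j ∈ R \ {a, b}, d (a, j) + (d (a, a) + d (a, b)) := by
    rw [← Finset.sum_sdiff (f := fun j => d (a, j)) hsub, Finset.sum_pair habne]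
  have hcolb : ∑ j ∈ R, d (b, j)
      = ∑ j ∈ R \ {a, b}, d (b, j) + (d (b, a) + d (b, b)) := by
    rw [← Finset.sum_sdiff (f := fun j => d (b, j)) hsub, Finset.sum_pair habne]
  have hdaa : d (a, a) = 0 := by rw [hd]; simp
  have hdbb : d (b, b) = 0 := by rw [hd]; simp
  have hdab : d (a, b) + d (b, a)
      = (if v a < v b then (1:ℤ) else 0) - (if v b < v a then 1 else 0) := by
    rw [hd]
    simp only [hs, Equiv.swap_apply_left, Equiv.swap_apply_right]
    have h1 : ¬ (b < a) := not_lt.mpr (le_of_lt hab)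
    simp [hab, h1]
    ring
  -- per-element identity off {a,b}
  set t : ℕ+ → ℤ := fun j =>
    (if a < j ∧ j < b ∧ v a < v j ∧ v j < v b then (2:ℤ) else 0)
      - (if a < j ∧ j < b ∧ v b < v j ∧ v j < v a then 2 else 0) with ht
  have hper : ∀ i : ℕ+, i ≠ a → i ≠ b →
      d (a, i) + (d (b, i) + (d (i, a) + d (i, b))) = t i := by
    intro i hia hib
    have hsi : s i = i := Equiv.swap_apply_of_ne_of_ne hia hib
    have hva : v i ≠ v a := fun h => hia (v.injective h)
    have hvb : v i ≠ v b := fun h => hib (v.injective h)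
    rw [hd, ht]
    simp only [hs, Equiv.swap_apply_left, Equiv.swap_apply_right, hsi]
    simp only [kb_pnlt, Equiv.swap_apply_of_ne_of_ne hia hib]
    exact kb_tsum (a:ℕ) (b:ℕ) (i:ℕ) (v a : ℕ) (v b : ℕ) (v i : ℕ)
      (kb_pnlt.mp hab) (kb_pnne hia) (kb_pnne hib) (kb_pnne hva) (kb_pnne hvb)
  -- assemble
  have hfinal : ∑ p ∈ Q, d p
      = ((if v a < v b then (1:ℤ) else 0) - (if v b < v a then 1 else 0))
        + ∑ i ∈ R \ {a, b}, t i := by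
    rw [hsum1, hcola, hcolb]
    have : ∑ i ∈ R \ {a, b}, (∑ j ∈ R, d (i, j)) = ∑ i ∈ R \ {a, b}, (d (i, a) + d (i, b)) := by
      refine Finset.sum_congr rfl ?_
      intro i hi
      rw [Finset.mem_sdiff] at hi
      have hia : i ≠ a := fun h => hi.2 (by rw [h]; exact Finset.mem_insert_self a {b})
      have hib : i ≠ b := fun h => hi.2 (by rw [h]; exact Finset.mem_insert_of_mem (Finset.mem_singleton_self b))
      exact hrow i hia hib
    rw [this]
    have hts : ∑ i ∈ R \ {a, b}, t i
        = ∑ i ∈ R \ {a, b}, (d (a, i) + (d (b, i) + (d (i, a) + d (i, b)))) := by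
      refine Finset.sum_congr rfl ?_
      intro i hi
      rw [Finset.mem_sdiff] at hi
      have hia : i ≠ a := fun h => hi.2 (by rw [h]; exact Finset.mem_insert_self a {b})
      have hib : i ≠ b := fun h => hi.2 (by rw [h]; exact Finset.mem_insert_of_mem (Finset.mem_singleton_self b))
      exact (hper i hia hib).symm
    rw [hts]
    simp only [Finset.sum_add_distrib]
    rw [hdaa, hdbb, ← hdab]
    ring
  -- restrict the t-sum to Ioo a b
  have hIoo : Finset.Ioo a b ⊆ R \ {a, b} := by
    intro x hx
    rw [Finset.mem_Ioo] at hx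
    rw [Finset.mem_sdiff, hR, Finset.mem_Iio]
    refine ⟨hx.2.trans hbN, ?_⟩
    intro hmem
    rcases Finset.mem_insert.mp hmem with rfl | hm
    · exact absurd hx.1 (lt_irrefl _)
    · rw [Finset.mem_singleton] at hm; subst hm; exact absurd hx.2 (lt_irrefl _)
  have htzero : ∀ x ∈ R \ {a, b}, x ∉ Finset.Ioo a b → t x = 0 := by
    intro x _ hx
    rw [Finset.mem_Ioo] at hx
    push_neg at hx
    rw [ht]
    rcases lt_or_ge a x with h1 | h1
    · have h2 : ¬ x < b := not_lt.mpr (hx h1)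
      simp [h2]
    · have h2 : ¬ a < x := not_lt.mpr h1
      simp [h2]
  have htIoo : ∑ i ∈ R \ {a, b}, t i = ∑ i ∈ Finset.Ioo a b, t i :=
    (Finset.sum_subset hIoo htzero).symm
  have hcongr : ∑ i ∈ Finset.Ioo a b, t i
      = ∑ j ∈ Finset.Ioo a b, ((if v a < v j ∧ v j < v b then (2:ℤ) else 0)
          - (if v b < v j ∧ v j < v a then 2 else 0)) := by
    refine Finset.sum_congr rfl ?_
    intro i hi
    rw [Finset.mem_Ioo] at hi
    rw [ht]
    simp [hi.1, hi.2]
  have := hdiff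
  rw [hfinal, htIoo, hcongr] at this
  linarith [this]


/-- Characterization of covers: multiplying by `(a b)` raises length by exactly 1
iff `v a < v b` and no value between them occurs at a position between `a` and `b`. -/
private lemma kb_len_mul_swap (v : Sinf) (hv : FinSupp v) (a b : ℕ+) (hab : a < b) :
    len (v * Equiv.swap a b) = len v + 1 ↔
      (v a < v b ∧ ∀ c, a < c → c < b → ¬(v a < v c ∧ v c < v b)) := by
  have hid := kb_len_diff v hv a b hab
  have hvab : v a ≠ v b := fun h => (ne_of_lt hab) (v.injective h)
  set S : ℤ := ∑ j ∈ Finset.Ioo a b,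
      ((if v a < v j ∧ v j < v b then (2:ℤ) else 0)
        - (if v b < v j ∧ v j < v a then 2 else 0)) with hS
  constructor
  · intro h
    rw [h] at hid
    push_cast at hid
    rcases lt_or_gt_of_ne hvab with hlt | hgt
    · refine ⟨hlt, ?_⟩
      have hterm0 : ∀ j ∈ Finset.Ioo a b,
          (0:ℤ) ≤ ((if v a < v j ∧ v j < v b then (2:ℤ) else 0)
            - (if v b < v j ∧ v j < v a then 2 else 0)) := by
        intro j _
        have h2 : ¬ (v b < v j ∧ v j < v a) := by
          rintro ⟨h1, h2⟩; exact absurd hlt (not_lt.mpr (le_of_lt (h2.trans' h1)))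
        simp only [h2, if_false]
        split_ifs <;> norm_num
      have hS0 : S = 0 := by
        have h1 : (if v a < v b then (1:ℤ) else 0) = 1 := if_pos hlt
        have h2 : (if v b < v a then (1:ℤ) else 0) = 0 := if_neg (not_lt.mpr (le_of_lt hlt))
        rw [h1, h2] at hid
        linarith
      intro c hac hcb hmid
      have hc : c ∈ Finset.Ioo a b := Finset.mem_Ioo.mpr ⟨hac, hcb⟩
      have hz := (Finset.sum_eq_zero_iff_of_nonneg hterm0).mp (by rw [← hS]; exact hS0) c hc
      rw [if_pos hmid] at hz
      have h2 : ¬ (v b < v c ∧ v c < v a) := by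
        rintro ⟨ha1, ha2⟩; exact absurd hlt (not_lt.mpr (le_of_lt (ha2.trans' ha1)))
      rw [if_neg h2] at hz
      norm_num at hz
    · exfalso
      have hterm0 : ∀ j ∈ Finset.Ioo a b,
          ((if v a < v j ∧ v j < v b then (2:ℤ) else 0)
            - (if v b < v j ∧ v j < v a then 2 else 0)) ≤ 0 := by
        intro j _
        have h2 : ¬ (v a < v j ∧ v j < v b) := by
          rintro ⟨h1, h2⟩; exact absurd hgt (not_lt.mpr (le_of_lt (h2.trans' h1)))
        simp only [h2, if_false]
        split_ifs <;> norm_num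
      have hSle : S ≤ 0 := Finset.sum_nonpos hterm0
      have h1 : (if v a < v b then (1:ℤ) else 0) = 0 := if_neg (not_lt.mpr (le_of_lt hgt))
      have h2 : (if v b < v a then (1:ℤ) else 0) = 1 := if_pos hgt
      rw [h1, h2] at hid
      linarith
  · rintro ⟨hlt, hnomid⟩
    have hterm : ∀ j ∈ Finset.Ioo a b,
        ((if v a < v j ∧ v j < v b then (2:ℤ) else 0)
          - (if v b < v j ∧ v j < v a then 2 else 0)) = 0 := by
      intro j hj
      rw [Finset.mem_Ioo] at hj
      have hm := hnomid j hj.1 hj.2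
      have h2 : ¬ (v b < v j ∧ v j < v a) := by
        rintro ⟨ha1, ha2⟩; exact absurd hlt (not_lt.mpr (le_of_lt (ha2.trans' ha1)))
      rw [if_neg hm, if_neg h2]
      norm_num
    have hS0 : S = 0 := Finset.sum_eq_zero hterm
    have h1 : (if v a < v b then (1:ℤ) else 0) = 1 := if_pos hlt
    have h2 : (if v b < v a then (1:ℤ) else 0) = 0 := if_neg (not_lt.mpr (le_of_lt hlt))
    rw [hS0, h1, h2] at hid
    have : (len (v * Equiv.swap a b) : ℤ) = (len v : ℤ) + 1 := by linarith
    exact_mod_cast this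

private lemma kb_finSupp_mul_swap {v : Sinf} (hv : FinSupp v) (a b : ℕ+) :
    FinSupp (v * Equiv.swap a b) := by
  refine Set.Finite.subset (Set.Finite.union hv ((Set.finite_singleton b).insert a)) ?_
  intro x hx
  rcases eq_or_ne x a with rfl | hxa
  · exact Or.inr (Set.mem_insert _ _)
  rcases eq_or_ne x b with rfl | hxb
  · exact Or.inr (Set.mem_insert_of_mem _ rfl)
  left
  have : (v * Equiv.swap a b) x = v x := by
    rw [Equiv.Perm.mul_apply, Equiv.swap_apply_of_ne_of_ne hxa hxb]
  rw [Set.mem_setOf_eq, this] at hx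
  exact hx

private def KBConds (k : ℕ+) (u w : Sinf) : Prop :=
  (∀ i : ℕ+, i ≤ k → u i ≤ w i) ∧ (∀ i : ℕ+, k < i → w i ≤ u i) ∧
  (∀ i j : ℕ+, i < j → (j ≤ k ∨ k < i) → u i < u j → w i < w j)

private lemma kb_forward_step (k : ℕ+) (u v : Sinf) (hv : FinSupp v)
    (hc : KBConds k u v) {w : Sinf} (hcov : kCover k v w) : KBConds k u w := by
  obtain ⟨hlen, a, b, hak, hkb, rfl⟩ := hcov
  have hab : a < b := lt_of_le_of_lt hak hkb
  obtain ⟨hva, hnm⟩ := (kb_len_mul_swap v hv a b hab).mp hlen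
  have hwa : (v * Equiv.swap a b) a = v b := by
    rw [Equiv.Perm.mul_apply, Equiv.swap_apply_left]
  have hwb : (v * Equiv.swap a b) b = v a := by
    rw [Equiv.Perm.mul_apply, Equiv.swap_apply_right]
  have hwx : ∀ x : ℕ+, x ≠ a → x ≠ b → (v * Equiv.swap a b) x = v x := by
    intro x h1 h2
    rw [Equiv.Perm.mul_apply, Equiv.swap_apply_of_ne_of_ne h1 h2]
  refine ⟨?_, ?_, ?_⟩
  · intro i hik
    rcases eq_or_ne i a with rfl | hia
    · rw [hwa]; exact le_trans (hc.1 i hik) (le_of_lt hva)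
    · rw [hwx i hia (ne_of_lt (lt_of_le_of_lt hik hkb))]; exact hc.1 i hik
  · intro i hki
    rcases eq_or_ne i b with rfl | hib
    · rw [hwb]; exact le_trans (le_of_lt hva) (hc.2.1 i hki)
    · rw [hwx i (fun h => absurd hki (by rw [h]; exact not_lt.mpr hak)) hib]
      exact hc.2.1 i hki
  · intro i j hij hside huij
    have hvij := hc.2.2 i j hij hside huij
    rcases eq_or_ne i a with rfl | hia
    · have hjk : j ≤ k := by
        rcases hside with h | h
        · exact h
        · exact absurd (lt_of_lt_of_le h hak) (lt_irrefl k)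
      have hjb : j ≠ b := ne_of_lt (lt_of_le_of_lt hjk hkb)
      rw [hwa, hwx j (ne_of_gt hij) hjb]
      have hmid := hnm j hij (lt_of_le_of_lt hjk hkb)
      have h2 : ¬ (v j < v b) := fun hh => hmid ⟨hvij, hh⟩
      exact lt_of_le_of_ne (not_lt.mp h2) fun h => hjb (v.injective h.symm)
    rcases eq_or_ne j a with rfl | hja
    · have hib : i ≠ b := ne_of_lt (hij.trans hab)
      rw [hwa, hwx i hia hib]
      exact hvij.trans hva
    rcases eq_or_ne i b with rfl | hib
    · have hjb : j ≠ i := ne_of_gt hij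
      rw [hwb, hwx j hja hjb]
      exact hva.trans hvij
    rcases eq_or_ne j b with rfl | hjb
    · have hki : k < i := by
        rcases hside with h | h
        · exact absurd (lt_of_lt_of_le hkb h) (lt_irrefl k)
        · exact h
      have hai : a < i := lt_of_le_of_lt hak hki
      rw [hwb, hwx i hia hib]
      have hmid := hnm i hai hij
      have h2 : ¬ (v a < v i) := fun hh => hmid ⟨hh, hvij⟩
      exact lt_of_le_of_ne (not_lt.mp h2) fun h => hia (v.injective h)
    · rw [hwx i hia hib, hwx j hja hjb]
      exact hvij

private lemma kb_forward (k : ℕ+) (u w : Sinf) (hu : FinSupp u) (h : kBruhat k u w) :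
    KBConds k u w ∧ FinSupp w := by
  induction h with
  | refl => exact ⟨⟨fun i _ => le_rfl, fun i _ => le_rfl, fun i j _ _ h => h⟩, hu⟩
  | tail hstep hcov ih =>
    refine ⟨kb_forward_step k u _ ih.2 ih.1 hcov, ?_⟩
    obtain ⟨hlen, a, b, hak, hkb, rfl⟩ := hcov
    exact kb_finSupp_mul_swap ih.2 a b

private lemma kb_diff_finite {u w : Sinf} (hu : FinSupp u) (hw : FinSupp w) :
    {i : ℕ+ | u i ≠ w i}.Finite := by
  refine (hu.union hw).subset ?_
  intro i hi
  rw [Set.mem_setOf_eq] at hi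
  by_contra hcon
  rw [Set.mem_union, Set.mem_setOf_eq, Set.mem_setOf_eq] at hcon
  push_neg at hcon
  exact hi (hcon.1.trans hcon.2.symm)

/-- If the conditions hold and `u ≠ w`, then there is some `i ≤ k` with `u i < w i`. -/
private lemma kb_exists_a (k : ℕ+) (u w : Sinf) (hu : FinSupp u) (hw : FinSupp w)
    (hc : KBConds k u w) (hne : u ≠ w) : ∃ i : ℕ+, i ≤ k ∧ u i < w i := by
  by_contra hno
  push_neg at hno
  have heq : ∀ i : ℕ+, i ≤ k → u i = w i :=
    fun i hik => le_antisymm (hc.1 i hik) (hno i hik)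
  have hdf := kb_diff_finite hu hw
  have hdne : hdf.toFinset.Nonempty := by
    by_contra hcon
    rw [Finset.not_nonempty_iff_eq_empty, ← Finset.coe_inj, Set.Finite.coe_toFinset] at hcon
    refine hne (Equiv.ext ?_)
    intro i
    by_contra hcc
    have hmem : i ∈ ({i : ℕ+ | u i ≠ w i} : Set ℕ+) := hcc
    rw [hcon] at hmem
    simp at hmem
  obtain ⟨i0, hi0, hi0m⟩ := Finset.exists_min_image hdf.toFinset (fun i => u i) hdne
  rw [Set.Finite.mem_toFinset, Set.mem_setOf_eq] at hi0
  have hki0 : k < i0 := by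
    by_contra h
    exact hi0 (heq i0 (not_lt.mp h))
  have hwu : w i0 < u i0 := lt_of_le_of_ne (hc.2.1 i0 hki0) (fun h => hi0 h.symm)
  set m : ℕ+ := u.symm (w i0) with hm
  have hum : u m = w i0 := u.apply_symm_apply (w i0)
  have hmi0 : m ≠ i0 := by
    intro h
    rw [h] at hum
    exact hi0 hum
  have hkm : k < m := by
    by_contra h
    have h2 := heq m (not_lt.mp h)
    rw [hum] at h2
    exact hmi0 (w.injective h2.symm)
  have hmd : m ∈ hdf.toFinset := by
    rw [Set.Finite.mem_toFinset, Set.mem_setOf_eq]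
    intro h
    rw [hum] at h
    exact hmi0 (w.injective h.symm)
  have hmin := hi0m m hmd
  rw [hum] at hmin
  exact absurd hwu (not_lt.mpr hmin)

/-- The key step: produce a cover preserving the conditions. -/
private lemma kb_step (k : ℕ+) (u w : Sinf) (hu : FinSupp u) (hw : FinSupp w)
    (hc : KBConds k u w) (hne : u ≠ w) :
    ∃ a b : ℕ+, kCover k u (u * Equiv.swap a b) ∧
      KBConds k (u * Equiv.swap a b) w ∧ FinSupp (u * Equiv.swap a b) ∧
      u a < u b ∧ u b ≤ w a ∧ w b ≤ u a ∧ a < b := by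
  classical
  obtain ⟨a0, ha0k, ha0⟩ := kb_exists_a k u w hu hw hc hne
  set Sa : Finset ℕ+ := (Finset.Iic k).filter (fun i => u i < w i) with hSa
  have hSane : Sa.Nonempty := ⟨a0, by rw [hSa, Finset.mem_filter, Finset.mem_Iic]; exact ⟨ha0k, ha0⟩⟩
  obtain ⟨a, haS, haM⟩ := Finset.exists_max_image Sa (fun i => u i) hSane
  rw [hSa, Finset.mem_filter, Finset.mem_Iic] at haS
  obtain ⟨hak, hauw⟩ := haS
  have haM' : ∀ c : ℕ+, c ≤ k → u c < w c → u c ≤ u a := by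
    intro c h1 h2
    exact haM c (by rw [hSa, Finset.mem_filter, Finset.mem_Iic]; exact ⟨h1, h2⟩)
  -- find a candidate position with small `w`-value and `u`-value in `(u a, w a]`
  set S : Finset ℕ+ := (Finset.Ioc (u a) (w a)).image u.symm with hS
  set T : Finset ℕ+ := (Finset.Ioc (u a) (w a)).image w.symm with hT
  have hcard : T.card ≤ S.card := by
    rw [hS, hT, Finset.card_image_of_injective _ u.symm.injective,
      Finset.card_image_of_injective _ w.symm.injective]
  have haT : a ∈ T := by
    rw [hT, Finset.mem_image]
    exact ⟨w a, Finset.mem_Ioc.mpr ⟨hauw, le_rfl⟩, w.symm_apply_apply a⟩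
  have haS' : a ∉ S := by
    rw [hS, Finset.mem_image]
    rintro ⟨y, hy, hya⟩
    have hyu : y = u a := by
      have h2 := congrArg u hya
      rw [u.apply_symm_apply] at h2
      rw [← h2]
    rw [hyu, Finset.mem_Ioc] at hy
    exact absurd hy.1 (lt_irrefl _)
  have hnsub : ¬ S ⊆ T := by
    intro hsub
    have h2 := Finset.eq_of_subset_of_card_le hsub hcard
    rw [← h2] at haT
    exact haS' haT
  obtain ⟨c, hcS, hcT⟩ := Finset.not_subset.mp hnsub
  have hcu : u c ∈ Finset.Ioc (u a) (w a) := by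
    rw [hS, Finset.mem_image] at hcS
    obtain ⟨y, hy, hyc⟩ := hcS
    have h2 : u c = y := by
      have h3 := congrArg u hyc
      rw [u.apply_symm_apply] at h3
      exact h3.symm
    rwa [h2]
  rw [Finset.mem_Ioc] at hcu
  have hcw : w c ∉ Finset.Ioc (u a) (w a) := by
    intro h
    refine hcT ?_
    rw [hT, Finset.mem_image]
    exact ⟨w c, h, w.symm_apply_apply c⟩
  have hwc : w c ≤ u a := by
    by_contra h
    push_neg at h
    have hwc2 : w a < w c := by
      by_contra h2
      exact hcw (Finset.mem_Ioc.mpr ⟨h, not_lt.mp h2⟩)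
    rcases le_or_gt c k with h3 | h3
    · have h4 : u c < w c := lt_of_le_of_lt hcu.2 hwc2
      exact absurd hcu.1 (not_lt.mpr (haM' c h3 h4))
    · exact absurd (lt_of_le_of_lt (le_trans (hc.2.1 c h3) hcu.2) hwc2) (lt_irrefl _)
  have hck : k < c := by
    by_contra h
    exact absurd (lt_of_le_of_lt (le_trans (hc.1 c (not_lt.mp h)) hwc) hcu.1) (lt_irrefl _)
  -- the candidate set and its minimum
  have hdf := kb_diff_finite hu hw
  set Cb : Finset ℕ+ := hdf.toFinset.filter (fun i => k < i ∧ w i ≤ u a ∧ u a < u i) with hCb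
  have hcCb : c ∈ Cb := by
    rw [hCb, Finset.mem_filter, Set.Finite.mem_toFinset, Set.mem_setOf_eq]
    exact ⟨fun h => absurd (h ▸ hcu.1) (not_lt.mpr (h ▸ hwc)), hck, hwc, hcu.1⟩
  obtain ⟨b, hbC, hbm⟩ := Finset.exists_min_image Cb (fun i => u i) ⟨c, hcCb⟩
  rw [hCb, Finset.mem_filter] at hbC
  obtain ⟨hbd, hkb, hwb, hab'⟩ := hbC
  have hbm' : ∀ x : ℕ+, k < x → w x ≤ u a → u a < u x → u b ≤ u x := by
    intro x h1 h2 h3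
    refine hbm x ?_
    rw [hCb, Finset.mem_filter, Set.Finite.mem_toFinset, Set.mem_setOf_eq]
    exact ⟨fun h => absurd (h ▸ h3) (not_lt.mpr (h ▸ h2)), h1, h2, h3⟩
  have hbB : u b ≤ w a := le_trans (hbm c hcCb) hcu.2
  have hab : a < b := lt_of_le_of_lt hak hkb
  -- no middle value
  have hnm : ∀ c' : ℕ+, a < c' → c' < b → ¬(u a < u c' ∧ u c' < u b) := by
    rintro c' h1 h2 ⟨h3, h4⟩
    rcases le_or_gt c' k with h5 | h5
    · have h6 : u c' ≤ w c' := hc.1 c' h5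
      rcases lt_or_eq_of_le h6 with h7 | h7
      · exact absurd h3 (not_lt.mpr (haM' c' h5 h7))
      · have h8 := hc.2.2 a c' h1 (Or.inl h5) h3
        rw [← h7] at h8
        exact absurd (lt_of_lt_of_le (h8.trans h4) hbB) (lt_irrefl _)
    · by_cases h6 : w c' ≤ u a
      · exact absurd h4 (not_lt.mpr (hbm' c' h5 h6 h3))
      · push_neg at h6
        have h7 := hc.2.2 c' b h2 (Or.inr h5) h4
        exact absurd (lt_of_le_of_lt hwb (h6.trans h7)) (lt_irrefl _)
  -- the cover
  have hlen : len (u * Equiv.swap a b) = len u + 1 :=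
    (kb_len_mul_swap u hu a b hab).mpr ⟨hab', hnm⟩
  have hcov : kCover k u (u * Equiv.swap a b) := ⟨hlen, a, b, hak, hkb, rfl⟩
  have hwa' : (u * Equiv.swap a b) a = u b := by
    rw [Equiv.Perm.mul_apply, Equiv.swap_apply_left]
  have hwb' : (u * Equiv.swap a b) b = u a := by
    rw [Equiv.Perm.mul_apply, Equiv.swap_apply_right]
  have hwx : ∀ x : ℕ+, x ≠ a → x ≠ b → (u * Equiv.swap a b) x = u x := by
    intro x hx1 hx2
    rw [Equiv.Perm.mul_apply, Equiv.swap_apply_of_ne_of_ne hx1 hx2]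
  refine ⟨a, b, hcov, ⟨?_, ?_, ?_⟩, kb_finSupp_mul_swap hu a b, hab', hbB, hwb, hab⟩
  · intro i hik
    rcases eq_or_ne i a with rfl | hia
    · rw [hwa']; exact hbB
    · rw [hwx i hia (ne_of_lt (lt_of_le_of_lt hik hkb))]; exact hc.1 i hik
  · intro i hki
    rcases eq_or_ne i b with rfl | hib
    · rw [hwb']; exact hwb
    · rw [hwx i (fun h => absurd hki (by rw [h]; exact not_lt.mpr hak)) hib]
      exact hc.2.1 i hki
  · intro i j hij hside hvij
    rcases eq_or_ne i a with rfl | hia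
    · -- i = a
      have hjk : j ≤ k := by
        rcases hside with h | h
        · exact h
        · exact absurd (lt_of_lt_of_le h hak) (lt_irrefl k)
      have hjb : j ≠ b := ne_of_lt (lt_of_le_of_lt hjk hkb)
      rw [hwa'] at hvij
      rw [hwx j (ne_of_gt hij) hjb] at hvij
      exact hc.2.2 i j hij (Or.inl hjk) (hab'.trans hvij)
    rcases eq_or_ne j a with rfl | hja
    · -- j = a, i < a
      have hib : i ≠ b := ne_of_lt (hij.trans hab)
      rw [hwa'] at hvij
      rw [hwx i hia hib] at hvij
      rcases lt_or_gt_of_ne (fun h : u i = u j => hia (u.injective h)) with h1 | h1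
      · exact hc.2.2 i j hij hside h1
      · have hik : i ≤ k := le_trans (le_of_lt hij) hak
        have h6 : u i ≤ w i := hc.1 i hik
        rcases lt_or_eq_of_le h6 with h7 | h7
        · exact absurd h1 (not_lt.mpr (haM' i hik h7))
        · rw [← h7]
          exact lt_of_lt_of_le hvij hbB
    rcases eq_or_ne i b with rfl | hib
    · -- i = b, b < j
      have hja' : j ≠ a := hja
      have hjb : j ≠ i := ne_of_gt hij
      rw [hwb'] at hvij
      rw [hwx j hja' hjb] at hvij
      by_cases h1 : w j ≤ u a
      · have h2 := hbm' j (hkb.trans hij) h1 hvij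
        have h3 : u i < u j := lt_of_le_of_ne h2 (fun h => hjb (u.injective h.symm))
        exact hc.2.2 i j hij (Or.inr hkb) h3
      · push_neg at h1
        exact lt_of_le_of_lt hwb h1
    rcases eq_or_ne j b with rfl | hjb
    · -- j = b, k < i < b
      have hki : k < i := by
        rcases hside with h | h
        · exact absurd (lt_of_lt_of_le hkb h) (lt_irrefl k)
        · exact h
      rw [hwb'] at hvij
      rw [hwx i hia hib] at hvij
      exact hc.2.2 i j hij (Or.inr hki) (hvij.trans hab')
    · rw [hwx i hia hib, hwx j hja hjb] at hvij
      exact hc.2.2 i j hij hside hvij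

private lemma kb_backward (k : ℕ+) (w : Sinf) (hw : FinSupp w) :
    ∀ n : ℕ, ∀ u : Sinf, FinSupp u → KBConds k u w →
      (∑ᶠ i : ℕ+, Nat.dist ((w i : ℕ)) ((u i : ℕ))) = n → kBruhat k u w := by
  intro n
  induction n using Nat.strong_induction_on with
  | _ n ih =>
  intro u hu hc hM
  rcases eq_or_ne u w with rfl | hne
  · exact Relation.ReflTransGen.refl
  obtain ⟨a, b, hcov, hc', hu', h1, h2, h3, hab⟩ := kb_step k u w hu hw hc hne
  have hwa' : (u * Equiv.swap a b) a = u b := by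
    rw [Equiv.Perm.mul_apply, Equiv.swap_apply_left]
  have hwb' : (u * Equiv.swap a b) b = u a := by
    rw [Equiv.Perm.mul_apply, Equiv.swap_apply_right]
  have hwx : ∀ x : ℕ+, x ≠ a → x ≠ b → (u * Equiv.swap a b) x = u x := by
    intro x hx1 hx2
    rw [Equiv.Perm.mul_apply, Equiv.swap_apply_of_ne_of_ne hx1 hx2]
  set T : Finset ℕ+ := (hu.union hw).toFinset ∪ {a, b} with hT
  have haT : a ∈ T := by
    rw [hT, Finset.mem_union]
    exact Or.inr (Finset.mem_insert_self a {b})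
  have hsupu : Function.support (fun i : ℕ+ => Nat.dist ((w i:ℕ)) ((u i:ℕ))) ⊆ ↑T := by
    intro i hi
    rw [Function.mem_support] at hi
    have hne' : w i ≠ u i := by
      intro h
      exact hi (by rw [h, Nat.dist_self])
    rw [hT, Finset.coe_union, Set.mem_union, Set.Finite.coe_toFinset]
    left
    rw [Set.mem_union, Set.mem_setOf_eq, Set.mem_setOf_eq]
    by_contra hcon
    push_neg at hcon
    exact hne' (hcon.2.trans hcon.1.symm)
  have hsupu' : Function.support
      (fun i : ℕ+ => Nat.dist ((w i:ℕ)) (((u * Equiv.swap a b) i:ℕ))) ⊆ ↑T := by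
    intro i hi
    rw [Function.mem_support] at hi
    rcases eq_or_ne i a with rfl | hia
    · exact haT
    rcases eq_or_ne i b with rfl | hib
    · rw [hT, Finset.coe_union, Set.mem_union]
      right
      exact Finset.mem_coe.mpr (Finset.mem_insert_of_mem (Finset.mem_singleton_self i))
    have hne' : w i ≠ u i := by
      intro h
      exact hi (by rw [hwx i hia hib, h, Nat.dist_self])
    rw [hT, Finset.coe_union, Set.mem_union, Set.Finite.coe_toFinset]
    left
    rw [Set.mem_union, Set.mem_setOf_eq, Set.mem_setOf_eq]
    by_contra hcon
    push_neg at hcon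
    exact hne' (hcon.2.trans hcon.1.symm)
  have hM1 : ∑ᶠ i : ℕ+, Nat.dist ((w i:ℕ)) ((u i:ℕ))
      = ∑ i ∈ T, Nat.dist ((w i:ℕ)) ((u i:ℕ)) :=
    finsum_eq_finset_sum_of_support_subset _ hsupu
  have hM2 : ∑ᶠ i : ℕ+, Nat.dist ((w i:ℕ)) (((u * Equiv.swap a b) i:ℕ))
      = ∑ i ∈ T, Nat.dist ((w i:ℕ)) (((u * Equiv.swap a b) i:ℕ)) :=
    finsum_eq_finset_sum_of_support_subset _ hsupu'
  have h1n : (u a : ℕ) < (u b : ℕ) := kb_pnlt.mp h1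
  have h2n : (u b : ℕ) ≤ (w a : ℕ) := kb_pnle.mp h2
  have h3n : (w b : ℕ) ≤ (u a : ℕ) := kb_pnle.mp h3
  have hlt : ∑ i ∈ T, Nat.dist ((w i:ℕ)) (((u * Equiv.swap a b) i:ℕ))
      < ∑ i ∈ T, Nat.dist ((w i:ℕ)) ((u i:ℕ)) := by
    refine Finset.sum_lt_sum ?_ ⟨a, haT, ?_⟩
    · intro i _
      rcases eq_or_ne i a with rfl | hia
      · rw [hwa']
        simp only [Nat.dist]
        omega
      rcases eq_or_ne i b with rfl | hib
      · rw [hwb']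
        simp only [Nat.dist]
        omega
      · rw [hwx i hia hib]
    · rw [hwa']
      simp only [Nat.dist]
      omega
  refine Relation.ReflTransGen.head hcov ?_
  refine ih _ ?_ _ hu' hc' rfl
  rw [hM2]
  rw [← hM, hM1]
  exact hlt

end KBAuxSec

/-- Theorem A of [BS97a]. Characterization of the `k`-Bruhat
order. -/
theorem kBruhat_characterization (k : ℕ+) (u w : Sinf)
    (hu : FinSupp u) (hw : FinSupp w) :
    kBruhat k u w ↔
      ((∀ i : ℕ+, i ≤ k → u i ≤ w i) ∧
       (∀ i : ℕ+, k < i → w i ≤ u i) ∧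
       (∀ i j : ℕ+, i < j → (j ≤ k ∨ k < i) → u i < u j → w i < w j)) := by
  constructor
  · intro h
    exact (kb_forward k u w hu h).1
  · intro h
    exact kb_backward k w hw _ u hu h rfl
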